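/- Let ε ∈ (0, 1/512], let P ⊆ ℝ^d be a finite set with diam(P) ≤ 1, and let T ⊆ conv(P) be a finite nonempty set. Let a ∈ P be a point attaining r = max_{p ∈ P} dist(p, conv(T)), let a' be the nearest point to a in conv(T), and let v = (a − a')/r. Suppose r ≥ 8·ε^{1/3}. Then every point o ∈ conv(P) satisfying ⟨v, o⟩ ≥ ⟨v, a⟩ − ε (i.e., lying in the ε-shadow halfspace determined by a) satisfies dist(o, conv(T ∪ {a})) ≤ (1 − ε^{2/3}) · dist(o, conv(T)). -/

import Mathlib

open Metric
open scoped Classical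
open scoped RealInnerProductSpace

private lemma proj_inner_le {E : Type*} [NormedAddCommGroup E] [InnerProductSpace ℝ E]
    {K : Set E} (hK : Convex ℝ K) {y x : E} (hy : y ∈ K)
    (h : dist x y = Metric.infDist x K) : ∀ w ∈ K, ⟪x - y, w - y⟫ ≤ 0 := by
  rw [Metric.infDist_eq_iInf, dist_eq_norm] at h
  simp_rw [dist_eq_norm] at h
  exact (norm_eq_iInf_iff_real_inner_le_zero hK hy).1 h

private lemma cube_le_aux {u : ℝ} (hu0 : 0 < u) (h : u ^ 3 ≤ 1 / 512) : u ≤ 1 / 8 := by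
  nlinarith [sq_nonneg (u - 1/8), sq_nonneg (u + 1/8)]

private lemma sqrt_le_aux {x y : ℝ} (hx : 0 ≤ x) (hy : 0 ≤ y) (h : x ^ 2 ≤ y ^ 2) :
    x ≤ y := by
  calc x = Real.sqrt (x ^ 2) := (Real.sqrt_sq hx).symm
    _ ≤ Real.sqrt (y ^ 2) := Real.sqrt_le_sqrt h
    _ = y := Real.sqrt_sq hy

private lemma usq_aux {u : ℝ} (hu0 : 0 < u) (hu8 : u ≤ 1/8) : u ^ 2 ≤ 1 / 64 := by
  have h1 : u * u ≤ (1/8 : ℝ) * (1/8) := mul_le_mul hu8 hu8 hu0.le (by norm_num)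
  have h2 : u ^ 2 = u * u := by ring
  linarith

private lemma alpha_nonneg_aux {u ε r α : ℝ} (hu0 : 0 < u) (hu8 : u ≤ 1/8)
    (hu3 : u ^ 3 = ε) (hr8 : 8 * u ≤ r) (hα : r - ε ≤ α) : 0 ≤ α := by
  have h1 : u ^ 2 ≤ 1/64 := usq_aux hu0 hu8
  have h2 : u * u ^ 2 ≤ u * (1/64) := mul_le_mul_of_nonneg_left h1 hu0.le
  have h3 : u * u ^ 2 = u ^ 3 := by ring
  linarith

private lemma shrink_arith_main {u ε r δ α W B C : ℝ}
    (hu0 : 0 < u) (hu8 : u ≤ 1/8) (hu3 : u ^ 3 = ε)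
    (hr8 : 8 * u ≤ r) (hr1 : r ≤ 1)
    (hδ0 : 0 ≤ δ) (hδr : δ ≤ r)
    (hα_lb : r - ε ≤ α) (hαδ : α ≤ δ)
    (hW0 : 0 ≤ W) (hW2 : W ^ 2 = δ ^ 2 - α ^ 2)
    (hBr : r ≤ B) (hB1 : B ≤ 1)
    (hC_lb : r * α - W ≤ C) (hCub : C ≤ r * α) :
    0 ≤ C ∧ C ≤ B ^ 2 ∧ (2 * u ^ 2 - u ^ 4) * δ ^ 2 * B ^ 2 ≤ C ^ 2 ∧ u ^ 2 ≤ 1 / 64 := by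
  have hr0 : 0 < r := by linarith
  have hε0 : 0 < ε := by rw [← hu3]; positivity
  have hu2 : u ^ 2 ≤ 1/64 := usq_aux hu0 hu8
  have hr2le1 : r ^ 2 ≤ 1 := by
    have h1 : r * r ≤ 1 * 1 := mul_le_mul hr1 hr1 hr0.le (by norm_num)
    have h2 : r ^ 2 = r * r := by ring
    linarith
  have hr4 : r ^ 4 ≤ r ^ 2 := by
    have h1 : r ^ 2 * r ^ 2 ≤ r ^ 2 * 1 := mul_le_mul_of_nonneg_left hr2le1 (sq_nonneg r)
    have h2 : r ^ 2 * r ^ 2 = r ^ 4 := by ring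
    linarith
  have hεr : ε ≤ r ^ 3 / 512 := by
    have h1 : u ^ 3 ≤ (r / 8) ^ 3 := pow_le_pow_left₀ hu0.le (by linarith) 3
    have h2 : (r / 8 : ℝ) ^ 3 = r ^ 3 / 512 := by ring
    linarith [hu3 ▸ le_refl (u ^ 3), h1]
  have hrε4 : r * ε ≤ r ^ 4 / 512 := by
    have h1 : r * ε ≤ r * (r ^ 3 / 512) := mul_le_mul_of_nonneg_left hεr hr0.le
    have h2 : r * (r ^ 3 / 512) = r ^ 4 / 512 := by ring
    linarith
  have hrε2 : r * ε ≤ r ^ 2 / 512 := by linarith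
  have hrε0 : 0 ≤ r - ε := alpha_nonneg_aux hu0 hu8 hu3 hr8 le_rfl
  have hδ2 : δ ^ 2 ≤ r ^ 2 := pow_le_pow_left₀ hδ0 hδr 2
  have hα2 : (r - ε) ^ 2 ≤ α ^ 2 := pow_le_pow_left₀ hrε0 hα_lb 2
  have hexp : (r - ε) ^ 2 = r ^ 2 - 2 * (r * ε) + ε ^ 2 := by ring
  have hW2ub : W ^ 2 ≤ r ^ 4 / 256 := by linarith [hW2, hδ2, hα2, hrε4, sq_nonneg ε, hexp]
  have hW16 : W ≤ r ^ 2 / 16 := by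
    refine sqrt_le_aux hW0 (by positivity) ?_
    have h2 : (r ^ 2 / 16) ^ 2 = r ^ 4 / 256 := by ring
    linarith
  have hC_lb2 : 479 / 512 * r ^ 2 ≤ C := by
    have h1 : r * (r - ε) ≤ r * α := mul_le_mul_of_nonneg_left hα_lb hr0.le
    have h2 : r * (r - ε) = r ^ 2 - r * ε := by ring
    linarith [hC_lb, hW16, hrε2]
  have hC0 : 0 ≤ C := le_trans (by positivity) hC_lb2
  have hCB : C ≤ B ^ 2 := by
    have h1 : r * α ≤ r * δ := mul_le_mul_of_nonneg_left hαδ hr0.le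
    have h2 : r * δ ≤ r * r := mul_le_mul_of_nonneg_left hδr hr0.le
    have h3 : r ^ 2 ≤ B ^ 2 := pow_le_pow_left₀ hr0.le hBr 2
    have h4 : r * r = r ^ 2 := by ring
    linarith [hCub]
  refine ⟨hC0, hCB, ?_, hu2⟩
  have h64 : 64 * u ^ 2 ≤ r ^ 2 := by
    have h1 : (8 * u) ^ 2 ≤ r ^ 2 := pow_le_pow_left₀ (by positivity) hr8 2
    have h2 : (8 * u) ^ 2 = 64 * u ^ 2 := by ring
    linarith
  have hB2le : B ^ 2 ≤ 1 := by
    have h1 : B ^ 2 ≤ 1 ^ 2 := pow_le_pow_left₀ (le_trans hr0.le hBr) hB1 2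
    have h2 : (1 : ℝ) ^ 2 = 1 := by norm_num
    linarith
  have ha : (0 : ℝ) ≤ 2 * u ^ 2 - u ^ 4 := by
    have h1 : u ^ 2 * u ^ 2 ≤ u ^ 2 * (1/64) := mul_le_mul_of_nonneg_left hu2 (sq_nonneg u)
    have h2 : u ^ 2 * u ^ 2 = u ^ 4 := by ring
    linarith [sq_nonneg u, h1, h2]
  have g1 : (2 * u ^ 2 - u ^ 4) * δ ^ 2 * B ^ 2 ≤ (2 * u ^ 2 - u ^ 4) * δ ^ 2 := by
    have h1 : (2 * u ^ 2 - u ^ 4) * δ ^ 2 * B ^ 2 ≤ (2 * u ^ 2 - u ^ 4) * δ ^ 2 * 1 :=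
      mul_le_mul_of_nonneg_left hB2le (mul_nonneg ha (sq_nonneg δ))
    linarith
  have g2 : (2 * u ^ 2 - u ^ 4) * δ ^ 2 ≤ 2 * (u ^ 2 * δ ^ 2) := by
    have h1 : (0 : ℝ) ≤ u ^ 4 * δ ^ 2 := by positivity
    have h2 : (2 * u ^ 2 - u ^ 4) * δ ^ 2 = 2 * (u ^ 2 * δ ^ 2) - u ^ 4 * δ ^ 2 := by ring
    linarith
  have g3 : u ^ 2 * δ ^ 2 ≤ u ^ 2 * r ^ 2 := mul_le_mul_of_nonneg_left hδ2 (sq_nonneg u)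
  have g4 : u ^ 2 * r ^ 2 ≤ r ^ 2 / 64 * r ^ 2 := by
    have := mul_le_mul_of_nonneg_right (by linarith : u ^ 2 ≤ r ^ 2 / 64) (sq_nonneg r)
    linarith [this]
  have g5 : (479 / 512 * r ^ 2) ^ 2 ≤ C ^ 2 := pow_le_pow_left₀ (by positivity) hC_lb2 2
  have g6 : (479 / 512 * r ^ 2) ^ 2 = (479 / 512 : ℝ) ^ 2 * (r ^ 2 * r ^ 2) := by ring
  have g7 : r ^ 2 / 64 * r ^ 2 = (r ^ 2 * r ^ 2) / 64 := by ring
  linarith [g1, g2, g3, g4, g5, g6, g7, mul_nonneg (sq_nonneg r) (sq_nonneg r)]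

set_option maxHeartbeats 1000000 in
theorem shrink_lemma
    (d : ℕ) (ε : ℝ) (hε : ε ∈ Set.Ioc (0 : ℝ) (1 / 512))
    (P : Finset (EuclideanSpace ℝ (Fin d)))
    (hdiam : Metric.diam (↑P : Set (EuclideanSpace ℝ (Fin d))) ≤ 1)
    (T : Finset (EuclideanSpace ℝ (Fin d))) (hT : T.Nonempty)
    (hTP : (↑T : Set (EuclideanSpace ℝ (Fin d))) ⊆
      convexHull ℝ (↑P : Set (EuclideanSpace ℝ (Fin d))))
    (a : EuclideanSpace ℝ (Fin d)) (haP : a ∈ P)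
    (r : ℝ)
    (hra : r = Metric.infDist a (convexHull ℝ (↑T : Set (EuclideanSpace ℝ (Fin d)))))
    (hmax : ∀ p ∈ P,
      Metric.infDist p (convexHull ℝ (↑T : Set (EuclideanSpace ℝ (Fin d)))) ≤ r)
    (a' : EuclideanSpace ℝ (Fin d))
    (ha'T : a' ∈ convexHull ℝ (↑T : Set (EuclideanSpace ℝ (Fin d))))
    (ha'near : dist a a' = r)
    (v : EuclideanSpace ℝ (Fin d)) (hv : v = r⁻¹ • (a - a'))
    (hrbig : 8 * ε ^ ((1 : ℝ) / 3) ≤ r) :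
    ∀ o ∈ convexHull ℝ (↑P : Set (EuclideanSpace ℝ (Fin d))),
      ⟪v, a⟫ - ε ≤ ⟪v, o⟫ →
      Metric.infDist o
          (convexHull ℝ (↑(insert a T) : Set (EuclideanSpace ℝ (Fin d)))) ≤
        (1 - ε ^ ((2 : ℝ) / 3)) *
          Metric.infDist o (convexHull ℝ (↑T : Set (EuclideanSpace ℝ (Fin d)))) := by
  intro o hoP hshadow
  have hε0 : (0:ℝ) < ε := hε.1
  set u : ℝ := ε ^ ((1:ℝ)/3) with hu_def
  have hu0 : 0 < u := Real.rpow_pos_of_pos hε0 _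
  have hu3 : u ^ (3:ℕ) = ε := by
    rw [hu_def, ← Real.rpow_natCast (ε ^ ((1:ℝ)/3)) 3, ← Real.rpow_mul hε0.le]
    norm_num
  have he23 : ε ^ ((2:ℝ)/3) = u ^ (2:ℕ) := by
    rw [hu_def, ← Real.rpow_natCast (ε ^ ((1:ℝ)/3)) 2, ← Real.rpow_mul hε0.le]
    norm_num
  have hu8 : u ≤ 1/8 := cube_le_aux hu0 (by rw [hu3]; exact hε.2)
  have hr0 : 0 < r := lt_of_lt_of_le (by positivity) hrbig
  set K : Set (EuclideanSpace ℝ (Fin d)) := convexHull ℝ (↑T : Set (EuclideanSpace ℝ (Fin d)))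
    with hK_def
  have hKc : IsCompact K := T.finite_toSet.isCompact_convexHull ℝ
  obtain ⟨t0, ht0T⟩ := hT
  have hKne : K.Nonempty := ⟨t0, subset_convexHull ℝ _ ht0T⟩
  have hKconv : Convex ℝ K := convex_convexHull ℝ _
  have hPc : IsCompact (convexHull ℝ (↑P : Set (EuclideanSpace ℝ (Fin d)))) :=
    P.finite_toSet.isCompact_convexHull ℝ
  have hPb : Bornology.IsBounded (convexHull ℝ (↑P : Set (EuclideanSpace ℝ (Fin d)))) :=
    hPc.isBounded
  have hdiam' : diam (convexHull ℝ (↑P : Set (EuclideanSpace ℝ (Fin d)))) ≤ 1 := by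
    rw [convexHull_diam]; exact hdiam
  have haPc : a ∈ convexHull ℝ (↑P : Set (EuclideanSpace ℝ (Fin d))) :=
    subset_convexHull ℝ _ haP
  have hKP : K ⊆ convexHull ℝ (↑P : Set (EuclideanSpace ℝ (Fin d))) :=
    convexHull_min hTP (convex_convexHull ℝ _)
  have hr1 : r ≤ 1 := by
    rw [← ha'near]
    exact le_trans (dist_le_diam_of_mem hPb haPc (hKP ha'T)) hdiam'
  -- the projection o' of o on K
  obtain ⟨o', ho'K, ho'dist⟩ := hKc.exists_infDist_eq_dist hKne o
  set δ : ℝ := Metric.infDist o K with hδ_def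
  have hδn : δ = ‖o - o'‖ := by rw [ho'dist, dist_eq_norm]
  have hδ0 : 0 ≤ δ := Metric.infDist_nonneg
  have hprojo : ∀ w ∈ K, ⟪o - o', w - o'⟫ ≤ 0 :=
    proj_inner_le hKconv ho'K ho'dist.symm
  have hproja : ∀ w ∈ K, ⟪a - a', w - a'⟫ ≤ 0 :=
    proj_inner_le hKconv ha'T (by rw [ha'near, hra])
  -- δ ≤ r
  have hδr : δ ≤ r := by
    have hsub : (↑P : Set (EuclideanSpace ℝ (Fin d))) ⊆ cthickening r K := by
      intro p hp
      rw [mem_cthickening_iff]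
      exact (ENNReal.le_ofReal_iff_toReal_le (infEdist_ne_top hKne) hr0.le).2 (hmax p hp)
    have hoc : o ∈ cthickening r K :=
      convexHull_min hsub (hKconv.cthickening r) hoP
    rw [mem_cthickening_iff] at hoc
    exact ENNReal.toReal_le_of_le_ofReal hr0.le hoc
  -- basic facts about v
  have hnaa' : ‖a - a'‖ = r := by rw [← dist_eq_norm, ha'near]
  have hrv : r • v = a - a' := by
    rw [hv, smul_smul, mul_inv_cancel₀ hr0.ne', one_smul]
  have hvnorm : ‖v‖ = 1 := by
    rw [hv, norm_smul, hnaa', Real.norm_eq_abs, abs_of_pos (inv_pos.2 hr0),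
      inv_mul_cancel₀ hr0.ne']
  have hva : ⟪v, a - a'⟫ = r := by
    rw [hv, real_inner_smul_left, real_inner_self_eq_norm_mul_norm, hnaa']
    field_simp
  have hvo'a' : ⟪v, o' - a'⟫ ≤ 0 := by
    have h1 := hproja o' ho'K
    rw [← hrv, real_inner_smul_left] at h1
    have h2 : r * ⟪v, o' - a'⟫ ≤ r * 0 := by linarith
    exact le_of_mul_le_mul_left h2 hr0
  -- main scalars
  set α : ℝ := ⟪v, o - o'⟫ with hα_def
  set s : EuclideanSpace ℝ (Fin d) := a' - o' with hs_def
  set w : EuclideanSpace ℝ (Fin d) := (o - o') - α • v with hw_def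
  set W : ℝ := ‖w‖ with hW_def
  set S : ℝ := ‖s‖ with hS_def
  set B : ℝ := ‖a - o'‖ with hB_def
  set C : ℝ := ⟪o - o', a - o'⟫ with hC_def
  have hβ : 0 ≤ ⟪v, s⟫ := by
    rw [hs_def]
    have : ⟪v, a' - o'⟫ = -⟪v, o' - a'⟫ := by
      rw [← inner_neg_right]; congr 1; abel
    rw [this]; linarith
  have hα_lb : r - ε ≤ α := by
    have h1 : ⟪v, o - o'⟫ = ⟪v, o⟫ - ⟪v, o'⟫ := inner_sub_right v o o'
    have h2 : ⟪v, a - a'⟫ = ⟪v, a⟫ - ⟪v, a'⟫ := inner_sub_right v a a'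
    have h3 : ⟪v, o' - a'⟫ = ⟪v, o'⟫ - ⟪v, a'⟫ := inner_sub_right v o' a'
    rw [hα_def, h1]
    rw [h2] at hva; rw [h3] at hvo'a'
    linarith
  have hαδ : α ≤ δ := by
    rw [hα_def, hδn]
    calc ⟪v, o - o'⟫ ≤ ‖v‖ * ‖o - o'‖ := real_inner_le_norm v (o - o')
      _ = ‖o - o'‖ := by rw [hvnorm, one_mul]
  have hα0 : 0 ≤ α := alpha_nonneg_aux hu0 hu8 hu3 hrbig hα_lb
  -- Pythagoras
  have hW2 : W^2 = δ^2 - α^2 := by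
    have hxv : ⟪o - o', v⟫ = α := by rw [real_inner_comm, ← hα_def]
    rw [hW_def, hw_def, hδn, norm_sub_sq_real, real_inner_smul_right, hxv, norm_smul,
      Real.norm_eq_abs, hvnorm, mul_one, sq_abs]
    ring
  -- decomposition of C
  have hC_split : C = r * α + ⟪o - o', s⟫ := by
    have h1 : a - o' = (a - a') + s := by rw [hs_def]; abel
    have hxv : ⟪o - o', v⟫ = α := by rw [real_inner_comm, ← hα_def]
    rw [hC_def, h1, inner_add_right, ← hrv, real_inner_smul_right, hxv]
  have hCub : C ≤ r * α := by
    have := hprojo a' ha'T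
    rw [← hs_def] at this
    linarith [hC_split, this]
  have hxs_lb : α * ⟪v, s⟫ - W * S ≤ ⟪o - o', s⟫ := by
    have hdecomp : o - o' = α • v + w := by rw [hw_def]; abel
    have h1 : ⟪o - o', s⟫ = α * ⟪v, s⟫ + ⟪w, s⟫ := by
      rw [hdecomp, inner_add_left, real_inner_smul_left]
    have h2 : |⟪w, s⟫| ≤ W * S := abs_real_inner_le_norm w s
    have h3 : -(W * S) ≤ ⟪w, s⟫ := neg_le_of_abs_le h2
    linarith
  have hS1 : S ≤ 1 := by
    rw [hS_def, hs_def, ← dist_eq_norm]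
    exact le_trans (dist_le_diam_of_mem hPb (hKP ha'T) (hKP ho'K)) hdiam'
  have hB1 : B ≤ 1 := by
    rw [hB_def, ← dist_eq_norm]
    exact le_trans (dist_le_diam_of_mem hPb haPc (hKP ho'K)) hdiam'
  have hBr : r ≤ B := by
    rw [hB_def, ← dist_eq_norm, hra]
    exact Metric.infDist_le_dist_of_mem ho'K
  have hB0 : 0 < B := lt_of_lt_of_le hr0 hBr
  have hW0 : 0 ≤ W := norm_nonneg _
  have hC_lb : r * α - W ≤ C := by
    have h1 : 0 ≤ α * ⟪v, s⟫ := mul_nonneg hα0 hβ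
    have h2 : W * S ≤ W := mul_le_of_le_one_right hW0 hS1
    linarith [hC_split, hxs_lb]
  obtain ⟨hC0, hCB, hgain, hu2⟩ :=
    shrink_arith_main hu0 hu8 hu3 hrbig hr1 hδ0 hδr hα_lb hαδ hW0 hW2 hBr hB1 hC_lb hCub
  -- the candidate point
  set t : ℝ := C / B^2 with ht_def
  have hB2 : (0:ℝ) < B^2 := by positivity
  have ht0 : 0 ≤ t := div_nonneg hC0 hB2.le
  have ht1 : t ≤ 1 := by rw [ht_def, div_le_one hB2]; exact hCB
  set q : EuclideanSpace ℝ (Fin d) := o' + t • (a - o') with hq_def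
  have hq_mem : q ∈ convexHull ℝ (insert a (↑T : Set (EuclideanSpace ℝ (Fin d)))) := by
    have hsub2 : K ⊆ convexHull ℝ (insert a (↑T : Set (EuclideanSpace ℝ (Fin d)))) :=
      convexHull_mono (Set.subset_insert a _)
    have haM : a ∈ convexHull ℝ (insert a (↑T : Set (EuclideanSpace ℝ (Fin d)))) :=
      subset_convexHull ℝ _ (Set.mem_insert a _)
    have hcomb := (convex_convexHull ℝ (insert a (↑T : Set (EuclideanSpace ℝ (Fin d)))))
      (hsub2 ho'K) haM (by linarith : (0:ℝ) ≤ 1 - t) ht0 (by ring)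
    have : (1 - t) • o' + t • a = q := by rw [hq_def]; module
    rwa [this] at hcomb
  -- norm computation
  have hoq : o - q = (o - o') - t • (a - o') := by rw [hq_def]; abel
  have hnormsq : ‖o - q‖^2 = δ^2 - 2*t*C + t^2 * B^2 := by
    rw [hoq, norm_sub_sq_real, real_inner_smul_right, norm_smul, Real.norm_eq_abs,
      mul_pow, sq_abs, ← hδn, ← hC_def, ← hB_def]
    ring
  have hkey : ‖o - q‖^2 ≤ ((1 - u^2) * δ)^2 := by
    rw [hnormsq]
    have ht2 : t^2 * B^2 = C^2 / B^2 := by rw [ht_def]; field_simp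
    have ht3 : 2*t*C = 2 * (C^2 / B^2) := by rw [ht_def]; field_simp
    rw [ht2, ht3]
    have h4 : (2*u^2 - u^4) * δ^2 ≤ C^2 / B^2 := by
      rw [le_div_iff₀ hB2]; linarith [hgain]
    have h5 : ((1 - u^2) * δ)^2 = δ^2 - (2*u^2 - u^4) * δ^2 := by ring
    rw [h5]; linarith [h4]
  have hfin : ‖o - q‖ ≤ (1 - u^2) * δ := by
    have h5 : (0:ℝ) ≤ (1 - u^2) * δ := mul_nonneg (by linarith) hδ0
    calc ‖o - q‖ = Real.sqrt (‖o - q‖^2) := by rw [Real.sqrt_sq (norm_nonneg _)]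
      _ ≤ Real.sqrt (((1 - u^2) * δ)^2) := Real.sqrt_le_sqrt hkey
      _ = (1 - u^2) * δ := Real.sqrt_sq h5
  have hgoal1 : Metric.infDist o
      (convexHull ℝ (↑(insert a T) : Set (EuclideanSpace ℝ (Fin d)))) ≤ ‖o - q‖ := by
    rw [Finset.coe_insert, ← dist_eq_norm]
    exact Metric.infDist_le_dist_of_mem hq_mem
  rw [he23]
  exact le_trans hgoal1 hfin
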